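/- Let R be an (L+1)×(L+1) symmetric positive definite matrix and d ∈ ℝ^{L+1} nonzero, and let R_Ω, d_Ω be the principal submatrix and subvector corresponding to a proper nonempty subset Ω of indices. Then 1/(dᵀR⁻¹d) ≤ 1/(d_Ωᵀ R_Ω⁻¹ d_Ω); i.e., the CEM output energy with full bands is at most that with partial bands, provided d_Ω ≠ 0. -/

import Mathlib

open Matrix

section Aux

variable {L : ℕ} (Ω : Finset (Fin (L + 1)))

/-- Extension by zero of a vector on `Ω` to a vector on `Fin (L+1)`. -/
noncomputable def extΩ (v : Ω → ℝ) : Fin (L + 1) → ℝ :=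
  fun i => if h : i ∈ Ω then v ⟨i, h⟩ else 0

lemma dotProduct_extΩ (w : Fin (L + 1) → ℝ) (v : Ω → ℝ) :
    w ⬝ᵥ extΩ Ω v = (fun i : Ω => w i) ⬝ᵥ v := by
  unfold dotProduct
  calc ∑ i : Fin (L + 1), w i * extΩ Ω v i
      = ∑ i ∈ Ω, w i * extΩ Ω v i := by
        refine (Finset.sum_subset (Finset.subset_univ Ω) ?_).symm
        intro i _ hi; simp [extΩ, dif_neg hi]
    _ = ∑ i ∈ Ω.attach, w ↑i * extΩ Ω v ↑i := (Finset.sum_attach Ω _).symm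
    _ = ∑ i ∈ Ω.attach, w ↑i * v i := by
        refine Finset.sum_congr rfl (fun i _ => ?_)
        simp [extΩ, dif_pos i.2]
    _ = ∑ i : Ω, (fun i : Ω => w ↑i) i * v i := by rw [Finset.univ_eq_attach]

lemma extΩ_dotProduct (w : Fin (L + 1) → ℝ) (v : Ω → ℝ) :
    extΩ Ω v ⬝ᵥ w = v ⬝ᵥ (fun i : Ω => w i) := by
  rw [dotProduct_comm, dotProduct_extΩ, dotProduct_comm]

lemma extΩ_ne_zero {v : Ω → ℝ} (hv : v ≠ 0) : extΩ Ω v ≠ 0 := by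
  intro h
  apply hv
  funext i
  have := congrFun h (i : Fin (L + 1))
  simpa [extΩ, dif_pos i.2] using this

lemma mulVec_extΩ (R : Matrix (Fin (L + 1)) (Fin (L + 1)) ℝ) (v : Ω → ℝ) (i : Ω) :
    (R *ᵥ extΩ Ω v) (i : Fin (L + 1)) =
      ((R.submatrix (fun i : Ω => (i : Fin (L + 1))) (fun i : Ω => (i : Fin (L + 1)))) *ᵥ v) i := by
  simpa [Matrix.mulVec, Matrix.submatrix] using dotProduct_extΩ Ω (R (i : Fin (L + 1))) v

end Aux

theorem cem_more_bands_better {L : ℕ} (R : Matrix (Fin (L + 1)) (Fin (L + 1)) ℝ)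
    (d : Fin (L + 1) → ℝ) (hR : R.PosDef) (hd : d ≠ 0)
    (Ω : Finset (Fin (L + 1))) (hΩne : Ω.Nonempty) (hΩproper : Ω ≠ Finset.univ)
    (hdΩ : (fun i : Ω => d i) ≠ 0) :
    (d ⬝ᵥ R⁻¹ *ᵥ d)⁻¹ ≤
      ((fun i : Ω => d i) ⬝ᵥ
        (R.submatrix (fun i : Ω => (i : Fin (L + 1))) (fun i : Ω => (i : Fin (L + 1))))⁻¹ *ᵥ
        (fun i : Ω => d i))⁻¹ := by
  classical
  set M : Matrix Ω Ω ℝ :=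
    R.submatrix (fun i : Ω => (i : Fin (L + 1))) (fun i : Ω => (i : Fin (L + 1))) with hM
  set dΩ : Ω → ℝ := fun i : Ω => d i with hdΩdef
  -- M is positive definite
  have hMpd : M.PosDef := by
    refine Matrix.PosDef.of_dotProduct_mulVec_pos (hR.isHermitian.submatrix _) fun x hx => ?_
    have h1 : (0:ℝ) < star (extΩ Ω x) ⬝ᵥ R *ᵥ extΩ Ω x :=
      hR.dotProduct_mulVec_pos (extΩ_ne_zero Ω hx)
    have h2 : extΩ Ω x ⬝ᵥ R *ᵥ extΩ Ω x = x ⬝ᵥ M *ᵥ x := by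
      rw [extΩ_dotProduct]
      congr 1
      funext i
      exact mulVec_extΩ Ω R x i
    simpa [star, h2] using h1
  have hMunit : IsUnit M.det := hMpd.det_pos.ne'.isUnit
  have hRunit : IsUnit R.det := hR.det_pos.ne'.isUnit
  -- notation
  set z : Ω → ℝ := M⁻¹ *ᵥ dΩ with hz
  set w : Fin (L + 1) → ℝ := R⁻¹ *ᵥ d with hw
  set y : Fin (L + 1) → ℝ := extΩ Ω z with hy
  have hMz : M *ᵥ z = dΩ := by
    rw [hz, Matrix.mulVec_mulVec, Matrix.mul_nonsing_inv _ hMunit, Matrix.one_mulVec]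
  have hRw : R *ᵥ w = d := by
    rw [hw, Matrix.mulVec_mulVec, Matrix.mul_nonsing_inv _ hRunit, Matrix.one_mulVec]
  set q : ℝ := dΩ ⬝ᵥ z with hq
  set p : ℝ := d ⬝ᵥ w with hp
  -- q > 0
  have hqpos : (0:ℝ) < q := by
    have := hMpd.inv.dotProduct_mulVec_pos hdΩ
    simpa [star, hq, hz] using this
  -- y ⬝ R y = q
  have hyRy : y ⬝ᵥ R *ᵥ y = q := by
    rw [hy, extΩ_dotProduct]
    have : (fun i : Ω => (R *ᵥ extΩ Ω z) (i : Fin (L + 1))) = M *ᵥ z := by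
      funext i; exact mulVec_extΩ Ω R z i
    rw [this, hMz, dotProduct_comm, hq]
  -- d ⬝ y = q
  have hdy : d ⬝ᵥ y = q := by
    rw [hy, dotProduct_extΩ, ← hdΩdef, hq]
  have hyd : y ⬝ᵥ d = q := by rw [dotProduct_comm, hdy]
  -- w ⬝ R y = d ⬝ y = q  (using symmetry of R)
  have hwRy : w ⬝ᵥ R *ᵥ y = q := by
    rw [Matrix.dotProduct_mulVec, ← Matrix.mulVec_transpose]
    have hRT : Rᵀ = R := by
      have := hR.isHermitian
      exact (Matrix.isHermitian_iff_isSymm.mp this).eq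
    rw [hRT, hRw, hdy]
  have hyRw : y ⬝ᵥ R *ᵥ w = q := by rw [hRw, hyd]
  have hwRw : w ⬝ᵥ R *ᵥ w = p := by rw [hRw, dotProduct_comm, hp]
  -- the key inequality : 0 ≤ (y-w) ⬝ R (y-w) = q - q - q + p = p - q
  have hkey : (0:ℝ) ≤ p - q := by
    have h1 := hR.posSemidef.dotProduct_mulVec_nonneg (y - w)
    rw [star_trivial] at h1
    have h2 : (y - w) ⬝ᵥ R *ᵥ (y - w) = p - q := by
      rw [Matrix.mulVec_sub, dotProduct_sub, sub_dotProduct, sub_dotProduct,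
        hyRy, hwRy, hyRw, hwRw]
      ring
    rw [h2] at h1
    exact h1
  have hqp : q ≤ p := by linarith
  calc p⁻¹ ≤ q⁻¹ := inv_anti₀ hqpos hqp
    _ = _ := rfl
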